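/- Let k ∈ ℝ and W ⊂ ℝ⁴ the plane spanned (at a point with parameter v) by u₁ = (1,0,0,0) and u₂ = (0, k sinh v, 1, k cosh v). With J₁(x₁,x₂,x₃,x₄) = (x₃,x₄,x₁,x₂) and g₁ = diag(1,1,-1,-1), the tangential endomorphism P of J₁ on W satisfies P² = (1/(k²+1))·Id on W. -/
import Mathlib


def J1 (v : Fin 4 → ℝ) : Fin 4 → ℝ := ![v 2, v 3, v 0, v 1]

def g1 (v w : Fin 4 → ℝ) : ℝ := v 0 * w 0 + v 1 * w 1 - v 2 * w 2 - v 3 * w 3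

theorem stmt_13 (k v : ℝ) (W : Submodule ℝ (Fin 4 → ℝ))
    (hW : W = Submodule.span ℝ
      {![1, 0, 0, 0], ![0, k * Real.sinh v, 1, k * Real.cosh v]})
    (P : (Fin 4 → ℝ) → (Fin 4 → ℝ))
    (hPW : ∀ u ∈ W, P u ∈ W)
    (horth : ∀ u ∈ W, ∀ w ∈ W, g1 (J1 u - P u) w = 0) :
    ∀ u ∈ W, P (P u) = (1 / (k ^ 2 + 1)) • u := by
  set e1 : Fin 4 → ℝ := ![1, 0, 0, 0] with he1
  set e2 : Fin 4 → ℝ := ![0, k * Real.sinh v, 1, k * Real.cosh v] with he2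
  have hmem : ∀ u, u ∈ W ↔ ∃ a b : ℝ, a • e1 + b • e2 = u := by
    intro u
    rw [hW]
    exact Submodule.mem_span_pair
  have he1W : e1 ∈ W := (hmem e1).2 ⟨1, 0, by simp⟩
  have he2W : e2 ∈ W := (hmem e2).2 ⟨0, 1, by simp⟩
  have hk : (k ^ 2 + 1) ≠ 0 := by positivity
  have hcosh : Real.cosh v ^ 2 = Real.sinh v ^ 2 + 1 := Real.cosh_sq v
  -- key: formula for P on W
  have key : ∀ a b : ℝ, ∀ u, a • e1 + b • e2 = u → u ∈ W →
      P u = b • e1 + (a / (k ^ 2 + 1)) • e2 := by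
    intro a b u hu huW
    obtain ⟨a', b', hP⟩ := (hmem (P u)).1 (hPW u huW)
    have h1 := horth u huW e1 he1W
    have h2 := horth u huW e2 he2W
    rw [← hP, ← hu] at h1 h2
    simp only [g1, J1, he1, he2, Pi.add_apply, Pi.sub_apply, Pi.smul_apply,
      smul_eq_mul, Matrix.cons_val_zero, Matrix.cons_val_one, Matrix.head_cons,
      Matrix.cons_val_two, Matrix.cons_val_three, Matrix.tail_cons,
      Matrix.cons_val_fin_one] at h1 h2
    have ha' : a' = b := by nlinarith [h1]
    have hb' : b' = a / (k ^ 2 + 1) := by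
      field_simp
      linear_combination h2 - (b' * k ^ 2) * hcosh
    rw [← hP, ha', hb']
  intro u huW
  obtain ⟨a, b, hu⟩ := (hmem u).1 huW
  have h1 := key a b u hu huW
  have h2 := key b (a / (k ^ 2 + 1)) (P u) h1.symm (hPW u huW)
  rw [h2, ← hu]
  funext i
  simp only [Pi.add_apply, Pi.smul_apply, smul_eq_mul]
  field_simp
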